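/- Let H be a k-uniform hypergraph on [n] (k odd) in which no set of (k−1) vertices is contained in more than one edge. In the flower ℓ-Kikuchi graph, any edge {S, T} is created by at most 2^{k³} good flower gadgets: i.e., the number of flower gadgets F = (C, P₁,...,P_k) such that S ⊕ T = P₁ ⊕ ... ⊕ P_k ⊕ C and |S ∩ (P_i∖{v_i})| = |T ∩ (P_i∖{v_i})| = (k−1)/2 for all i, is at most 2^{k³}. -/

import Mathlib

lemma mem_foldr_symmDiff {α : Type*} [DecidableEq α] (l : List (Finset α)) (C : Finset α) (x : α) :
    x ∈ l.foldr (fun A B => symmDiff A B) C ↔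
    Odd (l.countP (fun A => x ∈ A) + (if x ∈ C then 1 else 0)) := by
  induction l with
  | nil =>
      simp only [List.foldr_nil, List.countP_nil, Nat.zero_add, Nat.odd_iff]
      split <;> simp_all
  | cons A l ih =>
      simp only [List.foldr_cons, Finset.mem_symmDiff, ih, List.countP_cons, Nat.odd_iff] at *
      by_cases hA : x ∈ A <;> simp [hA] <;> omega

lemma countP_ofFn {α : Type*} {k : ℕ} (P : Fin k → α) (p : α → Bool) :
    (List.ofFn P).countP p = (Finset.univ.filter (fun i => p (P i))).card := by
  rw [List.ofFn_eq_map, List.countP_map, Fin.univ_def]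
  simp [Finset.filter, Finset.card, Multiset.countP_eq_card_filter, Function.comp,
    List.countP_eq_length_filter]
  rfl


/-- The iterated symmetric difference `P₁ ⊕ ⋯ ⊕ P_k ⊕ C`. -/
def totalSymmDiff {n k : ℕ} (C : Finset (Fin n)) (P : Fin k → Finset (Fin n)) :
    Finset (Fin n) :=
  (List.ofFn P).foldr (fun A B => symmDiff A B) C

lemma mem_totalSymmDiff {n k : ℕ} (C : Finset (Fin n)) (P : Fin k → Finset (Fin n)) (x : Fin n) :
    x ∈ totalSymmDiff C P ↔
    Odd ((Finset.univ.filter (fun j => x ∈ P j)).card + if x ∈ C then 1 else 0) := by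
  rw [totalSymmDiff, mem_foldr_symmDiff, countP_ofFn]
  simp

lemma gadget_facts {n k : ℕ} (C : Finset (Fin n)) (v : Fin k → Fin n)
    (P : Fin k → Finset (Fin n))
    (hC : C = Finset.image v Finset.univ)
    (hviP : ∀ i, v i ∈ P i)
    (hdisj : ∀ i j, i ≠ j → Disjoint (P i) (P j)) :
    (∀ i, P i \ {v i} ⊆ totalSymmDiff C P) ∧
    totalSymmDiff C P ⊆ Finset.univ.biUnion (fun i => P i \ {v i}) := by
  -- the filter for x ∈ P i is {i}
  have hfilter : ∀ (i : Fin k) (x : Fin n), x ∈ P i →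
      Finset.univ.filter (fun j => x ∈ P j) = {i} := by
    intro i x hx
    ext j
    simp only [Finset.mem_filter, Finset.mem_univ, true_and, Finset.mem_singleton]
    constructor
    · intro hj
      by_contra hne
      exact (Finset.disjoint_left.1 (hdisj j i hne)) hj hx
    · rintro rfl; exact hx
  have hvnot : ∀ i, v i ∉ totalSymmDiff C P := by
    intro i hmem
    rw [mem_totalSymmDiff] at hmem
    rw [hfilter i (v i) (hviP i)] at hmem
    have hvC : v i ∈ C := by
      rw [hC]; exact Finset.mem_image_of_mem v (Finset.mem_univ i)
    simp [hvC, Nat.odd_iff] at hmem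
  constructor
  · intro i x hx
    obtain ⟨hxP, hxv⟩ := Finset.mem_sdiff.1 hx
    rw [Finset.mem_singleton] at hxv
    have hxC : x ∉ C := by
      rw [hC]
      simp only [Finset.mem_image, Finset.mem_univ, true_and, not_exists]
      intro j hj
      rcases eq_or_ne j i with rfl | hne
      · exact hxv hj.symm
      · exact (Finset.disjoint_left.1 (hdisj j i hne)) (hj ▸ hviP j) hxP
    rw [mem_totalSymmDiff, hfilter i x hxP]
    simp [hxC]
  · intro x hx
    have hx' := hx
    rw [mem_totalSymmDiff] at hx'
    have hxC : x ∉ C := by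
      intro hxC
      rw [hC] at hxC
      obtain ⟨j, -, rfl⟩ := Finset.mem_image.1 hxC
      exact hvnot j hx
    have : (Finset.univ.filter (fun j => x ∈ P j)).card ≠ 0 := by
      simp [hxC, Nat.odd_iff] at hx'
      omega
    obtain ⟨j, hj⟩ := Finset.card_ne_zero.1 this
    rw [Finset.mem_filter] at hj
    refine Finset.mem_biUnion.2 ⟨j, Finset.mem_univ j, Finset.mem_sdiff.2 ⟨hj.2, ?_⟩⟩
    rw [Finset.mem_singleton]
    rintro rfl
    exact hvnot j hx

/-- In a `k`-uniform hypergraph (`k` odd) in which every `(k−1)`-set lies in at most one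
edge, any edge `{S,T}` of the flower `ℓ`-Kikuchi graph is created by at most `2^{k³}`
flower gadgets `(C, v, P)`. -/
theorem stmt13 (n k ℓ : ℕ) (hk : Odd k)
    (H : Finset (Finset (Fin n))) (hunif : ∀ E ∈ H, E.card = k)
    (hcodeg : ∀ R : Finset (Fin n), R.card = k - 1 →
      (H.filter (fun E => R ⊆ E)).card ≤ 1)
    (ℰ : Fin n → Finset (Finset (Fin n))) (hℰ : ∀ v : Fin n, ∀ E ∈ ℰ v, E ∈ H ∧ v ∈ E)
    (S T : Finset (Fin n)) (hS : S.card = ℓ) (hT : T.card = ℓ) :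
    Nat.card {g : Finset (Fin n) × (Fin k → Fin n) × (Fin k → Finset (Fin n)) //
      g.1 ∈ H ∧ Function.Injective g.2.1 ∧
      g.1 = Finset.image g.2.1 Finset.univ ∧
      (∀ i, g.2.2 i ∈ ℰ (g.2.1 i)) ∧
      (∀ i j, i ≠ j → Disjoint (g.2.2 i) (g.2.2 j)) ∧
      (∀ i, g.2.2 i ∩ g.1 = {g.2.1 i}) ∧
      symmDiff S T = totalSymmDiff g.1 g.2.2 ∧
      (∀ i, (S ∩ (g.2.2 i \ {g.2.1 i})).card = (k - 1) / 2) ∧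
      (∀ i, (T ∩ (g.2.2 i \ {g.2.1 i})).card = (k - 1) / 2)} ≤ 2 ^ (k ^ 3) := by
  set D := symmDiff S T with hD
  set G := {g : Finset (Fin n) × (Fin k → Fin n) × (Fin k → Finset (Fin n)) //
      g.1 ∈ H ∧ Function.Injective g.2.1 ∧
      g.1 = Finset.image g.2.1 Finset.univ ∧
      (∀ i, g.2.2 i ∈ ℰ (g.2.1 i)) ∧
      (∀ i j, i ≠ j → Disjoint (g.2.2 i) (g.2.2 j)) ∧
      (∀ i, g.2.2 i ∩ g.1 = {g.2.1 i}) ∧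
      symmDiff S T = totalSymmDiff g.1 g.2.2 ∧
      (∀ i, (S ∩ (g.2.2 i \ {g.2.1 i})).card = (k - 1) / 2) ∧
      (∀ i, (T ∩ (g.2.2 i \ {g.2.1 i})).card = (k - 1) / 2)} with hG
  by_cases hne : Nonempty G
  swap
  · haveI := not_nonempty_iff.1 hne
    rw [Nat.card_of_isEmpty]
    positivity
  -- basic facts about any gadget
  have hviP : ∀ g : G, ∀ i, g.1.2.1 i ∈ g.1.2.2 i := by
    intro g i
    have := g.2.2.2.2.2.2.1 i
    have : g.1.2.1 i ∈ g.1.2.2 i ∩ g.1.1 := by rw [this]; exact Finset.mem_singleton_self _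
    exact (Finset.mem_inter.1 this).1
  have hPH : ∀ g : G, ∀ i, g.1.2.2 i ∈ H := fun g i => (hℰ _ _ (g.2.2.2.2.1 i)).1
  have hPcard : ∀ g : G, ∀ i, (g.1.2.2 i).card = k := fun g i => hunif _ (hPH g i)
  have hQcard : ∀ g : G, ∀ i, (g.1.2.2 i \ {g.1.2.1 i}).card = k - 1 := by
    intro g i
    rw [Finset.sdiff_singleton_eq_erase, Finset.card_erase_of_mem (hviP g i), hPcard g i]
  have hfacts : ∀ g : G,
      (∀ i, g.1.2.2 i \ {g.1.2.1 i} ⊆ D) ∧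
      D ⊆ Finset.univ.biUnion (fun i => g.1.2.2 i \ {g.1.2.1 i}) := by
    intro g
    have := gadget_facts g.1.1 g.1.2.1 g.1.2.2 g.2.2.2.1 (hviP g)
      (fun i j h => g.2.2.2.2.2.1 i j h)
    rw [← g.2.2.2.2.2.2.2.1] at this
    exact this
  -- D is small
  have hDcard : D.card ≤ k * (k - 1) := by
    obtain ⟨g⟩ := hne
    calc D.card ≤ (Finset.univ.biUnion (fun i => g.1.2.2 i \ {g.1.2.1 i})).card :=
          Finset.card_le_card ((hfacts g).2)
      _ ≤ ∑ i : Fin k, (g.1.2.2 i \ {g.1.2.1 i}).card := Finset.card_biUnion_le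
      _ = k * (k - 1) := by
          simp [hQcard g, Finset.sum_const, Finset.card_univ]
  -- injection into functions to subsets of D
  have hinj : ∃ f : G → (Fin k → D.powerset), Function.Injective f := by
    refine ⟨fun g i => ⟨g.1.2.2 i \ {g.1.2.1 i}, Finset.mem_powerset.2 ((hfacts g).1 i)⟩, ?_⟩
    intro g g' hfg
    have hQ : ∀ i, g.1.2.2 i \ {g.1.2.1 i} = g'.1.2.2 i \ {g'.1.2.1 i} := by
      intro i
      have := congrFun hfg i
      exact Subtype.ext_iff.1 this
    -- the petals agree
    have hP : ∀ i, g.1.2.2 i = g'.1.2.2 i := by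
      intro i
      have h1 : g.1.2.2 i ∈ H.filter (fun E => g.1.2.2 i \ {g.1.2.1 i} ⊆ E) :=
        Finset.mem_filter.2 ⟨hPH g i, Finset.sdiff_subset⟩
      have h2 : g'.1.2.2 i ∈ H.filter (fun E => g.1.2.2 i \ {g.1.2.1 i} ⊆ E) := by
        refine Finset.mem_filter.2 ⟨hPH g' i, ?_⟩
        rw [hQ i]; exact Finset.sdiff_subset
      exact Finset.card_le_one.1 (hcodeg _ (hQcard g i)) _ h1 _ h2
    -- the centers of petals agree
    have hv : ∀ i, g.1.2.1 i = g'.1.2.1 i := by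
      intro i
      have e1 : g.1.2.2 i \ (g.1.2.2 i \ {g.1.2.1 i}) = {g.1.2.1 i} := by
        rw [Finset.sdiff_sdiff_self_left]
        exact Finset.inter_eq_right.2 (Finset.singleton_subset_iff.2 (hviP g i))
      have e2 : g'.1.2.2 i \ (g'.1.2.2 i \ {g'.1.2.1 i}) = {g'.1.2.1 i} := by
        rw [Finset.sdiff_sdiff_self_left]
        exact Finset.inter_eq_right.2 (Finset.singleton_subset_iff.2 (hviP g' i))
      have : ({g.1.2.1 i} : Finset (Fin n)) = {g'.1.2.1 i} := by
        rw [← e1, hQ i, hP i, e2]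
      exact Finset.singleton_injective this
    have hC : g.1.1 = g'.1.1 := by
      rw [g.2.2.2.1, g'.2.2.2.1]
      congr 1
      exact funext hv
    apply Subtype.ext
    exact Prod.ext hC (Prod.ext (funext hv) (funext hP))
  obtain ⟨f, hf⟩ := hinj
  calc Nat.card G ≤ Nat.card (Fin k → D.powerset) := Nat.card_le_card_of_injective f hf
    _ = D.powerset.card ^ k := by
        rw [Nat.card_fun]
        simp only [Nat.card_eq_fintype_card, Fintype.card_coe, Fintype.card_fin]
    _ = (2 ^ D.card) ^ k := by rw [Finset.card_powerset]
    _ = 2 ^ (D.card * k) := by rw [← pow_mul]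
    _ ≤ 2 ^ (k ^ 3) := by
        apply Nat.pow_le_pow_right (by norm_num)
        calc D.card * k ≤ (k * (k - 1)) * k := Nat.mul_le_mul_right k hDcard
          _ ≤ (k * k) * k := Nat.mul_le_mul_right k (Nat.mul_le_mul_left k (Nat.sub_le k 1))
          _ = k ^ 3 := by ring
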